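/- Let A₀, …, A_r ∈ ℝ^{p×n} with r ≥ r* ≥ 1, suppose O_{r*} = [A₀; …; A_{r*}] has full column rank while O_{r*−1} = [A₀; …; A_{r*−1}] does not, and let W(T) be the corresponding order-r STLOG. Then there exist constants 0 < C₁ ≤ C₂ (independent of T) such that C₁ T^{2r*+1} ≤ λ_min(W(T)) ≤ C₂ T^{2r*+1} for all sufficiently small T > 0. -/

import Mathlib

open Matrix

open intervalIntegral

/- ### Auxiliary lemmas -/

lemma sphereMin {m : ℕ} (hm : 0 < m) (f : (Fin m → ℝ) → ℝ) (hf : Continuous f)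
    (hpos : ∀ v : Fin m → ℝ, (∑ i, v i ^ 2) = 1 → 0 < f v) :
    ∃ c > 0, ∀ v : Fin m → ℝ, (∑ i, v i ^ 2) = 1 → c ≤ f v := by
  set S : Set (Fin m → ℝ) := {v | (∑ i, v i ^ 2) = 1} with hS
  have hcont : Continuous fun v : Fin m → ℝ => ∑ i, v i ^ 2 :=
    continuous_finset_sum _ fun i _ => (continuous_apply i).pow 2
  have hclosed : IsClosed S := isClosed_eq hcont continuous_const
  have hbdd : Bornology.IsBounded S := by
    apply (Metric.isBounded_closedBall (x := (0 : Fin m → ℝ)) (r := 1)).subset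
    intro v hv
    rw [Metric.mem_closedBall, dist_zero_right]
    refine (pi_norm_le_iff_of_nonneg zero_le_one).2 fun i => ?_
    have h1 : v i ^ 2 ≤ 1 := by
      rw [← hv]
      exact Finset.single_le_sum (f := fun i => v i ^ 2) (fun j _ => sq_nonneg _)
        (Finset.mem_univ i)
    have : |v i| ≤ 1 := by nlinarith [abs_nonneg (v i), sq_abs (v i)]
    exact this
  have hcompact : IsCompact S := Metric.isCompact_of_isClosed_isBounded hclosed hbdd
  have hne : S.Nonempty := by
    refine ⟨Pi.single ⟨0, hm⟩ 1, ?_⟩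
    simp only [hS, Set.mem_setOf_eq]
    rw [Finset.sum_eq_single ⟨0, hm⟩]
    · simp
    · intro j _ hj; rw [Pi.single_eq_of_ne hj]; ring
    · simp
  obtain ⟨v₀, hv₀S, hmin⟩ := hcompact.exists_isMinOn hne hf.continuousOn
  exact ⟨f v₀, hpos v₀ hv₀S, fun v hv => hmin hv⟩

lemma hilbert_integral (m : ℕ) (a : Fin m → ℝ) :
    (∫ s in (0:ℝ)..1, (∑ i, a i * s ^ (i : ℕ)) ^ 2) =
      ∑ i : Fin m, ∑ j : Fin m, a i * a j / ((i : ℕ) + (j : ℕ) + 1 : ℝ) := by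
  have hexp : ∀ s : ℝ, (∑ i, a i * s ^ (i : ℕ)) ^ 2 =
      ∑ i : Fin m, ∑ j : Fin m, (a i * a j) * s ^ ((i : ℕ) + (j : ℕ)) := by
    intro s
    rw [sq, Finset.sum_mul_sum]
    refine Finset.sum_congr rfl fun i _ => Finset.sum_congr rfl fun j _ => ?_
    rw [pow_add]; ring
  simp_rw [hexp]
  rw [integral_finset_sum]
  · refine Finset.sum_congr rfl fun i _ => ?_
    rw [integral_finset_sum]
    · refine Finset.sum_congr rfl fun j _ => ?_
      rw [intervalIntegral.integral_const_mul, integral_pow]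
      push_cast
      rw [one_pow, zero_pow (by omega)]
      ring
    · intro j _
      exact ((continuous_const.mul (continuous_pow _)).intervalIntegrable _ _)
  · intro i _
    exact (continuous_finset_sum _ fun j _ =>
      (continuous_const.mul (continuous_pow _))).intervalIntegrable _ _

lemma hilbert_pos (m : ℕ) (a : Fin m → ℝ) (ha : a ≠ 0) :
    0 < ∑ i : Fin m, ∑ j : Fin m, a i * a j / ((i : ℕ) + (j : ℕ) + 1 : ℝ) := by
  rw [← hilbert_integral]
  set pf : ℝ → ℝ := fun s => ∑ i, a i * s ^ (i : ℕ) with hpf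
  have hc : Continuous pf :=
    continuous_finset_sum _ fun i _ => continuous_const.mul (continuous_pow _)
  have hex : ∃ s₀ ∈ Set.Ioo (0:ℝ) 1, pf s₀ ≠ 0 := by
    by_contra h
    push_neg at h
    apply ha
    set P : Polynomial ℝ := ∑ i : Fin m, Polynomial.C (a i) * Polynomial.X ^ (i : ℕ) with hP
    have hPeval : ∀ s, P.eval s = pf s := by
      intro s; simp [hP, hpf, Polynomial.eval_finset_sum]
    have hP0 : P = 0 := by
      apply Polynomial.eq_zero_of_infinite_isRoot
      have hinf : (Set.Ioo (0:ℝ) 1).Infinite := Set.Ioo_infinite (by norm_num)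
      exact hinf.mono fun s hs => by
        simp only [Set.mem_setOf_eq, Polynomial.IsRoot, hPeval, h s hs]
    funext i
    have hco : P.coeff (i : ℕ) = a i := by
      simp [hP, Polynomial.finset_sum_coeff, Polynomial.coeff_C_mul, Polynomial.coeff_X_pow,
        Fin.val_inj]
    rw [hP0] at hco; simpa using hco.symm
  obtain ⟨s₀, hs₀, hps₀⟩ := hex
  have hint : IntervalIntegrable (fun s => pf s ^ 2) MeasureTheory.volume 0 1 :=
    (hc.pow 2).intervalIntegrable _ _
  rw [integral_pos_iff_support_of_nonneg_ae (Filter.Eventually.of_forall fun s => sq_nonneg _) hint]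
  refine ⟨by norm_num, ?_⟩
  obtain ⟨ε, hε, hball⟩ := Metric.isOpen_iff.1 (isOpen_ne_fun hc continuous_const) s₀ hps₀
  set l : ℝ := max (s₀ - ε) 0 with hl
  have hls : l < s₀ := by
    rw [hl]; apply max_lt (by linarith) hs₀.1
  have hsub : Set.Ioo l s₀ ⊆ Function.support (fun s => pf s ^ 2) ∩ Set.Ioc 0 1 := by
    intro x hx
    constructor
    · have hxball : x ∈ Metric.ball s₀ ε := by
        rw [Metric.mem_ball, Real.dist_eq, abs_sub_lt_iff]
        constructor
        · linarith [hx.2]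
        · have : s₀ - ε ≤ l := le_max_left _ _
          linarith [hx.1]
      have := hball hxball
      simp only [Function.mem_support]
      exact pow_ne_zero 2 this
    · exact ⟨lt_of_le_of_lt (le_max_right _ _) hx.1, le_of_lt (lt_of_lt_of_le hx.2 hs₀.2.le)⟩
  calc (0:ENNReal) < MeasureTheory.volume (Set.Ioo l s₀) := by
        rw [Real.volume_Ioo]; exact ENNReal.ofReal_pos.2 (by linarith)
    _ ≤ _ := MeasureTheory.measure_mono hsub

lemma hilbert_pd (m : ℕ) (hm : 0 < m) :
    ∃ μ > 0, ∀ a : Fin m → ℝ,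
      μ * (∑ i, a i ^ 2) ≤ ∑ i : Fin m, ∑ j : Fin m, a i * a j / ((i : ℕ) + (j : ℕ) + 1 : ℝ) := by
  set q : (Fin m → ℝ) → ℝ :=
    fun a => ∑ i : Fin m, ∑ j : Fin m, a i * a j / ((i : ℕ) + (j : ℕ) + 1 : ℝ) with hq
  have hqc : Continuous q := by
    apply continuous_finset_sum _ fun i _ => continuous_finset_sum _ fun j _ => ?_
    exact ((continuous_apply i).mul (continuous_apply j)).div_const _
  obtain ⟨μ, hμ, hmin⟩ := sphereMin hm q hqc (fun v hv => hilbert_pos m v (by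
    intro h0; rw [h0] at hv; simp at hv))
  refine ⟨μ, hμ, fun a => ?_⟩
  by_cases ha : a = 0
  · simp [ha, hq]
  · have hssum : 0 < ∑ i, a i ^ 2 := by
      obtain ⟨i, hi⟩ := Function.ne_iff.1 ha
      exact Finset.sum_pos' (fun j _ => sq_nonneg _)
        ⟨i, Finset.mem_univ i, by simp only [Pi.zero_apply] at hi; positivity⟩
    set t : ℝ := Real.sqrt (∑ i, a i ^ 2) with ht
    have htpos : 0 < t := Real.sqrt_pos.2 hssum
    have ht2 : t ^ 2 = ∑ i, a i ^ 2 := Real.sq_sqrt hssum.le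
    have hunit : (∑ i, (t⁻¹ • a) i ^ 2) = 1 := by
      simp only [Pi.smul_apply, smul_eq_mul, mul_pow, ← Finset.mul_sum]
      rw [← ht2]
      field_simp
    have hqs : q (t⁻¹ • a) = t⁻¹ ^ 2 * q a := by
      simp only [hq, Pi.smul_apply, smul_eq_mul, Finset.mul_sum]
      refine Finset.sum_congr rfl fun i _ => Finset.sum_congr rfl fun j _ => by ring
    have hthis := hmin _ hunit
    rw [hqs] at hthis
    have h2 : μ * t ^ 2 ≤ q a := by
      have h3 := mul_le_mul_of_nonneg_left hthis (sq_nonneg t)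
      calc μ * t ^ 2 = t ^ 2 * μ := by ring
        _ ≤ t ^ 2 * (t⁻¹ ^ 2 * q a) := h3
        _ = q a := by field_simp
    rw [ht2] at h2
    exact h2

lemma matrix_ker_of_rank_ne {m' : Type*} [Fintype m'] {n : ℕ} (M : Matrix m' (Fin n) ℝ)
    (h : M.rank ≠ n) : ∃ v : Fin n → ℝ, v ≠ 0 ∧ M.mulVec v = 0 := by
  have hrn : M.rank + Module.finrank ℝ (LinearMap.ker M.mulVecLin) = n := by
    have := LinearMap.finrank_range_add_finrank_ker M.mulVecLin
    rw [Matrix.rank]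
    rw [this]
    simp [Module.finrank_pi]
  have hlt : M.rank < n := lt_of_le_of_ne (by
    have := M.rank_le_card_width
    simpa using this) h
  have hker : LinearMap.ker M.mulVecLin ≠ ⊥ := by
    intro hbot
    rw [hbot] at hrn
    simp at hrn
    omega
  obtain ⟨v, hv, hvne⟩ := Submodule.exists_mem_ne_zero_of_ne_bot hker
  exact ⟨v, hvne, by rwa [LinearMap.mem_ker, Matrix.mulVecLin_apply] at hv⟩

lemma matrix_inj_of_rank_eq {m' : Type*} [Fintype m'] {n : ℕ} (M : Matrix m' (Fin n) ℝ)
    (h : M.rank = n) : ∀ v : Fin n → ℝ, M.mulVec v = 0 → v = 0 := by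
  intro v hv
  have hrn : M.rank + Module.finrank ℝ (LinearMap.ker M.mulVecLin) = n := by
    have := LinearMap.finrank_range_add_finrank_ker M.mulVecLin
    rw [Matrix.rank]
    rw [this]
    simp [Module.finrank_pi]
  have hker0 : Module.finrank ℝ (LinearMap.ker M.mulVecLin) = 0 := by omega
  have hbot : LinearMap.ker M.mulVecLin = ⊥ := Submodule.finrank_eq_zero.1 hker0
  have hv' : v ∈ LinearMap.ker M.mulVecLin := by
    rw [LinearMap.mem_ker, Matrix.mulVecLin_apply]; exact hv
  rw [hbot] at hv'
  simpa using hv'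

lemma quad_sum {n : ℕ} {ι : Type*} (s : Finset ι) (M : ι → Matrix (Fin n) (Fin n) ℝ)
    (v : Fin n → ℝ) :
    v ⬝ᵥ (∑ k ∈ s, M k).mulVec v = ∑ k ∈ s, v ⬝ᵥ (M k).mulVec v := by
  induction s using Finset.cons_induction with
  | empty => simp
  | cons a s ha ih =>
      rw [Finset.sum_cons, Finset.sum_cons, Matrix.add_mulVec, dotProduct_add, ih]

lemma quad_single {p n : ℕ} (A B : Matrix (Fin p) (Fin n) ℝ) (c : ℝ) (v : Fin n → ℝ) :
    v ⬝ᵥ (c • (Aᵀ * B)).mulVec v = c * (A.mulVec v ⬝ᵥ B.mulVec v) := by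
  rw [Matrix.smul_mulVec, dotProduct_smul, smul_eq_mul, ← Matrix.mulVec_mulVec,
    Matrix.dotProduct_mulVec, Matrix.vecMul_transpose]

lemma coef_identity {i j : ℕ} {T u w : ℝ} (hT : 0 < T) :
    (T ^ (i + j + 1) / (((i + j + 1) * Nat.factorial i * Nat.factorial j : ℕ) : ℝ)) * (u * w) =
      T * ((T ^ i / (Nat.factorial i : ℝ) * u) * (T ^ j / (Nat.factorial j : ℝ) * w) /
        ((i : ℝ) + (j : ℝ) + 1)) := by
  have hi : (Nat.factorial i : ℝ) ≠ 0 := Nat.cast_ne_zero.2 i.factorial_ne_zero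
  have hj : (Nat.factorial j : ℝ) ≠ 0 := Nat.cast_ne_zero.2 j.factorial_ne_zero
  have hij : ((i : ℝ) + (j : ℝ) + 1) ≠ 0 := by positivity
  push_cast
  rw [pow_add, pow_add, pow_one]
  field_simp

lemma lower_bound_lemma {p r rs : ℕ} (hr : rs ≤ r) (μ c : ℝ) (hμ : 0 < μ) (hc : 0 ≤ c)
    (hhil : ∀ a : Fin (r + 1) → ℝ,
      μ * (∑ i, a i ^ 2) ≤ ∑ i, ∑ j, a i * a j / ((i : ℕ) + (j : ℕ) + 1 : ℝ))
    (e : ℕ → Fin p → ℝ)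
    (hcoer : c ≤ ∑ k ∈ Finset.range (rs + 1), ∑ x, e k x ^ 2)
    (T : ℝ) (hT0 : 0 < T) (hT1 : T ≤ 1) :
    μ * c / ((rs.factorial : ℝ)) ^ 2 * T ^ (2 * rs + 1) ≤
      ∑ i ∈ Finset.range (r + 1), ∑ j ∈ Finset.range (r + 1),
        (T ^ (i + j + 1) / (((i + j + 1) * Nat.factorial i * Nat.factorial j : ℕ) : ℝ)) *
          (∑ x, e i x * e j x) := by
  -- Step A : rewrite RHS as a sum over x first
  have stepA : ∑ i ∈ Finset.range (r + 1), ∑ j ∈ Finset.range (r + 1),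
      (T ^ (i + j + 1) / (((i + j + 1) * Nat.factorial i * Nat.factorial j : ℕ) : ℝ)) *
        (∑ x, e i x * e j x)
      = ∑ x : Fin p, ∑ i ∈ Finset.range (r + 1), ∑ j ∈ Finset.range (r + 1),
        (T ^ (i + j + 1) / (((i + j + 1) * Nat.factorial i * Nat.factorial j : ℕ) : ℝ)) *
          (e i x * e j x) := by
    simp_rw [Finset.mul_sum]
    calc ∑ i ∈ Finset.range (r + 1), ∑ j ∈ Finset.range (r + 1), ∑ x : Fin p,
          (T ^ (i + j + 1) / (((i + j + 1) * Nat.factorial i * Nat.factorial j : ℕ) : ℝ)) *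
            (e i x * e j x)
        = ∑ i ∈ Finset.range (r + 1), ∑ x : Fin p, ∑ j ∈ Finset.range (r + 1),
          (T ^ (i + j + 1) / (((i + j + 1) * Nat.factorial i * Nat.factorial j : ℕ) : ℝ)) *
            (e i x * e j x) := Finset.sum_congr rfl fun i _ => Finset.sum_comm
      _ = ∑ x : Fin p, ∑ i ∈ Finset.range (r + 1), ∑ j ∈ Finset.range (r + 1),
          (T ^ (i + j + 1) / (((i + j + 1) * Nat.factorial i * Nat.factorial j : ℕ) : ℝ)) *
            (e i x * e j x) := Finset.sum_comm
  rw [stepA]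
  -- Step B : pointwise (in x) Hilbert bound
  have stepB : ∀ x : Fin p,
      T * (μ * ∑ i : Fin (r + 1), (T ^ (i : ℕ) / (Nat.factorial (i : ℕ) : ℝ) * e (i : ℕ) x) ^ 2)
      ≤ ∑ i ∈ Finset.range (r + 1), ∑ j ∈ Finset.range (r + 1),
        (T ^ (i + j + 1) / (((i + j + 1) * Nat.factorial i * Nat.factorial j : ℕ) : ℝ)) *
          (e i x * e j x) := by
    intro x
    set a : Fin (r + 1) → ℝ :=
      fun i => T ^ (i : ℕ) / (Nat.factorial (i : ℕ) : ℝ) * e (i : ℕ) x with ha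
    have hident : ∑ i ∈ Finset.range (r + 1), ∑ j ∈ Finset.range (r + 1),
        (T ^ (i + j + 1) / (((i + j + 1) * Nat.factorial i * Nat.factorial j : ℕ) : ℝ)) *
          (e i x * e j x)
        = T * ∑ i : Fin (r + 1), ∑ j : Fin (r + 1),
            a i * a j / ((i : ℕ) + (j : ℕ) + 1 : ℝ) := by
      rw [← Fin.sum_univ_eq_sum_range (fun i => ∑ j ∈ Finset.range (r + 1),
        (T ^ (i + j + 1) / (((i + j + 1) * Nat.factorial i * Nat.factorial j : ℕ) : ℝ)) *
          (e i x * e j x))]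
      rw [Finset.mul_sum]
      refine Finset.sum_congr rfl fun i _ => ?_
      rw [← Fin.sum_univ_eq_sum_range (fun j =>
        (T ^ ((i : ℕ) + j + 1) /
          ((((i : ℕ) + j + 1) * Nat.factorial (i : ℕ) * Nat.factorial j : ℕ) : ℝ)) *
          (e (i : ℕ) x * e j x))]
      rw [Finset.mul_sum]
      refine Finset.sum_congr rfl fun j _ => ?_
      simp only [ha]
      exact coef_identity hT0
    rw [hident]
    exact mul_le_mul_of_nonneg_left (hhil a) hT0.le
  -- combine over x
  have stepC : ∑ x : Fin p,
      T * (μ * ∑ i : Fin (r + 1), (T ^ (i : ℕ) / (Nat.factorial (i : ℕ) : ℝ) * e (i : ℕ) x) ^ 2)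
      ≤ ∑ x : Fin p, ∑ i ∈ Finset.range (r + 1), ∑ j ∈ Finset.range (r + 1),
        (T ^ (i + j + 1) / (((i + j + 1) * Nat.factorial i * Nat.factorial j : ℕ) : ℝ)) *
          (e i x * e j x) := Finset.sum_le_sum fun x _ => stepB x
  refine le_trans ?_ stepC
  -- Step D : lower bound the left side
  have stepD : ∑ x : Fin p,
      T * (μ * ∑ i : Fin (r + 1), (T ^ (i : ℕ) / (Nat.factorial (i : ℕ) : ℝ) * e (i : ℕ) x) ^ 2)
      = T * μ * ∑ i ∈ Finset.range (r + 1),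
          (T ^ i / (Nat.factorial i : ℝ)) ^ 2 * ∑ x, e i x ^ 2 := by
    simp_rw [← Finset.mul_sum]
    rw [mul_assoc]
    congr 1
    congr 1
    rw [Finset.sum_comm]
    rw [Fin.sum_univ_eq_sum_range (fun i => ∑ x : Fin p,
      (T ^ i / (Nat.factorial i : ℝ) * e i x) ^ 2)]
    refine Finset.sum_congr rfl fun i _ => ?_
    rw [Finset.mul_sum]
    exact Finset.sum_congr rfl fun x _ => by ring
  rw [stepD]
  -- restrict the sum to range (rs+1) and bound each coefficient
  have hsub : Finset.range (rs + 1) ⊆ Finset.range (r + 1) :=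
    Finset.range_subset_range.2 (by omega)
  have hnonneg : ∀ i ∈ Finset.range (r + 1), i ∉ Finset.range (rs + 1) →
      0 ≤ (T ^ i / (Nat.factorial i : ℝ)) ^ 2 * ∑ x, e i x ^ 2 := by
    intro i _ _
    have : (0:ℝ) ≤ ∑ x, e i x ^ 2 := Finset.sum_nonneg fun x _ => sq_nonneg _
    positivity
  have step1 : ∑ i ∈ Finset.range (rs + 1),
      (T ^ i / (Nat.factorial i : ℝ)) ^ 2 * ∑ x, e i x ^ 2
      ≤ ∑ i ∈ Finset.range (r + 1),
      (T ^ i / (Nat.factorial i : ℝ)) ^ 2 * ∑ x, e i x ^ 2 :=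
    Finset.sum_le_sum_of_subset_of_nonneg hsub hnonneg
  have step2 : (T ^ rs / (rs.factorial : ℝ)) ^ 2 * c ≤ ∑ i ∈ Finset.range (rs + 1),
      (T ^ i / (Nat.factorial i : ℝ)) ^ 2 * ∑ x, e i x ^ 2 := by
    calc (T ^ rs / (rs.factorial : ℝ)) ^ 2 * c
        ≤ (T ^ rs / (rs.factorial : ℝ)) ^ 2 * ∑ k ∈ Finset.range (rs + 1), ∑ x, e k x ^ 2 :=
          mul_le_mul_of_nonneg_left hcoer (by positivity)
      _ = ∑ i ∈ Finset.range (rs + 1), (T ^ rs / (rs.factorial : ℝ)) ^ 2 * ∑ x, e i x ^ 2 :=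
          Finset.mul_sum _ _ _
      _ ≤ ∑ i ∈ Finset.range (rs + 1), (T ^ i / (Nat.factorial i : ℝ)) ^ 2 * ∑ x, e i x ^ 2 := by
          refine Finset.sum_le_sum fun i hi => ?_
          have hirs : i ≤ rs := by
            have := Finset.mem_range.1 hi; omega
          have hfle : (Nat.factorial i : ℝ) ≤ (rs.factorial : ℝ) :=
            Nat.cast_le.2 (Nat.factorial_le hirs)
          have hfpos : (0:ℝ) < (Nat.factorial i : ℝ) := by
            exact_mod_cast i.factorial_pos
          have hTle : T ^ rs ≤ T ^ i := pow_le_pow_of_le_one hT0.le hT1 hirs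
          have hd : T ^ rs / (rs.factorial : ℝ) ≤ T ^ i / (Nat.factorial i : ℝ) :=
            div_le_div₀ (by positivity) hTle hfpos hfle
          have hdn : (0:ℝ) ≤ T ^ rs / (rs.factorial : ℝ) := by positivity
          have hsq : (T ^ rs / (rs.factorial : ℝ)) ^ 2 ≤ (T ^ i / (Nat.factorial i : ℝ)) ^ 2 :=
            pow_le_pow_left₀ hdn hd 2
          exact mul_le_mul_of_nonneg_right hsq
            (Finset.sum_nonneg fun x _ => sq_nonneg _)
  calc μ * c / ((rs.factorial : ℝ)) ^ 2 * T ^ (2 * rs + 1)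
      = T * μ * ((T ^ rs / (rs.factorial : ℝ)) ^ 2 * c) := by
        have hf : ((rs.factorial : ℝ)) ≠ 0 := Nat.cast_ne_zero.2 rs.factorial_ne_zero
        rw [pow_succ, two_mul, pow_add]
        field_simp
        ring
    _ ≤ T * μ * ∑ i ∈ Finset.range (r + 1),
          (T ^ i / (Nat.factorial i : ℝ)) ^ 2 * ∑ x, e i x ^ 2 := by
        refine mul_le_mul_of_nonneg_left (le_trans step2 step1) (by positivity)

/-- Minimum eigenvalue of a symmetric matrix, characterized as the minimum of the
quadratic form over unit vectors. -/
noncomputable def lambdaMin {n : Type*} [Fintype n] (W : Matrix n n ℝ) : ℝ :=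
  sInf {x | ∃ v : n → ℝ, (∑ i, v i ^ 2) = 1 ∧ x = v ⬝ᵥ W.mulVec v}

theorem stmt9 {p n : ℕ} (r rs : ℕ) (hrs : 1 ≤ rs) (hr : rs ≤ r)
    (A : ℕ → Matrix (Fin p) (Fin n) ℝ)
    (Ors : Matrix (Fin (rs + 1) × Fin p) (Fin n) ℝ)
    (hOrs : ∀ k i j, Ors (k, i) j = A k i j)
    (Ors1 : Matrix (Fin rs × Fin p) (Fin n) ℝ)
    (hOrs1 : ∀ k i j, Ors1 (k, i) j = A k i j)
    (hfull : Ors.rank = n)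
    (hnotfull : Ors1.rank ≠ n)
    (W : ℝ → Matrix (Fin n) (Fin n) ℝ)
    (hW : ∀ T : ℝ, W T = ∑ i ∈ Finset.range (r + 1), ∑ j ∈ Finset.range (r + 1),
      (T ^ (i + j + 1) /
        (((i + j + 1) * Nat.factorial i * Nat.factorial j : ℕ) : ℝ)) • ((A i)ᵀ * A j)) :
    ∃ C₁ C₂ : ℝ, 0 < C₁ ∧ C₁ ≤ C₂ ∧ ∃ δ > (0 : ℝ), ∀ T : ℝ, 0 < T → T < δ →
      C₁ * T ^ (2 * rs + 1) ≤ lambdaMin (W T) ∧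
      lambdaMin (W T) ≤ C₂ * T ^ (2 * rs + 1) := by
  have hn : 0 < n := by
    rcases Nat.eq_zero_or_pos n with h0 | h
    · exfalso
      apply hnotfull
      have h1 : Ors1.rank ≤ n := by simpa using Ors1.rank_le_card_width
      omega
    · exact h
  -- quadratic form expansion
  have hquad : ∀ (T : ℝ) (w : Fin n → ℝ), w ⬝ᵥ (W T).mulVec w =
      ∑ i ∈ Finset.range (r + 1), ∑ j ∈ Finset.range (r + 1),
        (T ^ (i + j + 1) / (((i + j + 1) * Nat.factorial i * Nat.factorial j : ℕ) : ℝ)) *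
          (∑ x, (A i).mulVec w x * (A j).mulVec w x) := by
    intro T w
    rw [hW T, quad_sum]
    refine Finset.sum_congr rfl fun i _ => ?_
    rw [quad_sum]
    refine Finset.sum_congr rfl fun j _ => ?_
    rw [quad_single]
    rfl
  -- coercivity constant from full rank of Ors
  obtain ⟨c, hcpos, hcoer⟩ := sphereMin hn
      (fun v => ∑ k ∈ Finset.range (rs + 1), ∑ x, ((A k).mulVec v x) ^ 2)
      (by
        refine continuous_finset_sum _ fun k _ => continuous_finset_sum _ fun x _ => ?_
        have hrepr : (fun v : Fin n → ℝ => (A k).mulVec v x) =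
            fun v => ∑ j, A k x j * v j := rfl
        exact (((by rw [hrepr]; exact continuous_finset_sum _ fun j _ =>
          continuous_const.mul (continuous_apply j)) :
          Continuous fun v : Fin n → ℝ => (A k).mulVec v x)).pow 2)
      (by
        intro v hv
        have hvne : v ≠ 0 := by
          intro h; rw [h] at hv; simp at hv
        have hOv : Ors.mulVec v ≠ 0 :=
          fun h => hvne (matrix_inj_of_rank_eq Ors hfull v h)
        obtain ⟨⟨k, x⟩, hkx⟩ := Function.ne_iff.1 hOv
        have heq : Ors.mulVec v (k, x) = (A (k : ℕ)).mulVec v x := by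
          simp [Matrix.mulVec, dotProduct, hOrs]
        apply Finset.sum_pos'
        · intro k _; exact Finset.sum_nonneg fun y _ => sq_nonneg _
        · refine ⟨(k : ℕ), Finset.mem_range.2 k.isLt, ?_⟩
          apply Finset.sum_pos' (fun y _ => sq_nonneg _)
          refine ⟨x, Finset.mem_univ x, ?_⟩
          have hne : (A (k : ℕ)).mulVec v x ≠ 0 := by
            rw [← heq]; simpa using hkx
          positivity)
  -- unit kernel vector of Ors1
  obtain ⟨v, hvne, hv0⟩ := matrix_ker_of_rank_ne Ors1 hnotfull
  have hAv : ∀ k, k < rs → (A k).mulVec v = 0 := by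
    intro k hk
    funext x
    have h1 := congrFun hv0 (⟨k, hk⟩, x)
    simpa [Matrix.mulVec, dotProduct, hOrs1] using h1
  have hvsum : 0 < ∑ i, v i ^ 2 := by
    obtain ⟨i, hi⟩ := Function.ne_iff.1 hvne
    exact Finset.sum_pos' (fun j _ => sq_nonneg _)
      ⟨i, Finset.mem_univ i, by simp only [Pi.zero_apply] at hi; positivity⟩
  set t : ℝ := Real.sqrt (∑ i, v i ^ 2) with ht
  have htpos : 0 < t := Real.sqrt_pos.2 hvsum
  have ht2 : t ^ 2 = ∑ i, v i ^ 2 := Real.sq_sqrt hvsum.le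
  set u : Fin n → ℝ := t⁻¹ • v with hu
  have huunit : (∑ i, u i ^ 2) = 1 := by
    simp only [hu, Pi.smul_apply, smul_eq_mul, mul_pow, ← Finset.mul_sum]
    rw [← ht2]
    field_simp
  have hAu : ∀ k, k < rs → (A k).mulVec u = 0 := by
    intro k hk
    rw [hu, Matrix.mulVec_smul, hAv k hk]
    simp
  -- Hilbert matrix constant
  obtain ⟨μ, hμ, hhil⟩ := hilbert_pd (r + 1) (Nat.succ_pos r)
  have hfac : (0:ℝ) < (rs.factorial : ℝ) := by exact_mod_cast rs.factorial_pos
  set C₁ : ℝ := μ * c / ((rs.factorial : ℝ)) ^ 2 with hC₁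
  have hC₁pos : 0 < C₁ := by positivity
  set B : ℝ := ∑ i ∈ Finset.range (r + 1), ∑ j ∈ Finset.range (r + 1),
      |∑ x, (A i).mulVec u x * (A j).mulVec u x| /
        (((i + j + 1) * Nat.factorial i * Nat.factorial j : ℕ) : ℝ) with hB
  refine ⟨C₁, max C₁ B, hC₁pos, le_max_left _ _, 1, one_pos, fun T hT0 hT1 => ?_⟩
  have hT1' : T ≤ 1 := hT1.le
  have hlow : ∀ w : Fin n → ℝ, (∑ i, w i ^ 2) = 1 →
      C₁ * T ^ (2 * rs + 1) ≤ w ⬝ᵥ (W T).mulVec w := by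
    intro w hw
    rw [hquad T w, hC₁]
    exact lower_bound_lemma hr μ c hμ hcpos.le hhil (fun k => (A k).mulVec w)
      (hcoer w hw) T hT0 hT1'
  have hSne : {x | ∃ w : Fin n → ℝ, (∑ i, w i ^ 2) = 1 ∧ x = w ⬝ᵥ (W T).mulVec w}.Nonempty :=
    ⟨u ⬝ᵥ (W T).mulVec u, u, huunit, rfl⟩
  have hSbdd : BddBelow {x | ∃ w : Fin n → ℝ, (∑ i, w i ^ 2) = 1 ∧ x = w ⬝ᵥ (W T).mulVec w} :=
    ⟨C₁ * T ^ (2 * rs + 1), by rintro y ⟨w, hw, rfl⟩; exact hlow w hw⟩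
  constructor
  · unfold lambdaMin
    apply le_csInf hSne
    rintro y ⟨w, hw, rfl⟩
    exact hlow w hw
  · have hmem : u ⬝ᵥ (W T).mulVec u ∈
        {x | ∃ w : Fin n → ℝ, (∑ i, w i ^ 2) = 1 ∧ x = w ⬝ᵥ (W T).mulVec w} :=
      ⟨u, huunit, rfl⟩
    have h1 : lambdaMin (W T) ≤ u ⬝ᵥ (W T).mulVec u := csInf_le hSbdd hmem
    refine h1.trans ?_
    rw [hquad T u]
    have hterm : ∀ i ∈ Finset.range (r + 1), ∀ j ∈ Finset.range (r + 1),
        (T ^ (i + j + 1) / (((i + j + 1) * Nat.factorial i * Nat.factorial j : ℕ) : ℝ)) *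
          (∑ x, (A i).mulVec u x * (A j).mulVec u x)
        ≤ T ^ (2 * rs + 1) * (|∑ x, (A i).mulVec u x * (A j).mulVec u x| /
            (((i + j + 1) * Nat.factorial i * Nat.factorial j : ℕ) : ℝ)) := by
      intro i _ j _
      have hDpos : (0:ℝ) < (((i + j + 1) * Nat.factorial i * Nat.factorial j : ℕ) : ℝ) := by
        have : 0 < ((i + j + 1) * Nat.factorial i * Nat.factorial j : ℕ) := by positivity
        exact_mod_cast this
      by_cases hi : i < rs
      · have hd0 : (∑ x, (A i).mulVec u x * (A j).mulVec u x) = 0 := by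
          rw [hAu i hi]; simp
        rw [hd0]; simp
      · by_cases hj : j < rs
        · have hd0 : (∑ x, (A i).mulVec u x * (A j).mulVec u x) = 0 := by
            rw [hAu j hj]; simp
          rw [hd0]; simp
        · push_neg at hi hj
          have hcoefnn : (0:ℝ) ≤ T ^ (i + j + 1) /
              (((i + j + 1) * Nat.factorial i * Nat.factorial j : ℕ) : ℝ) :=
            div_nonneg (pow_nonneg hT0.le _) hDpos.le
          calc (T ^ (i + j + 1) / (((i + j + 1) * Nat.factorial i * Nat.factorial j : ℕ) : ℝ)) *
                (∑ x, (A i).mulVec u x * (A j).mulVec u x)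
              ≤ (T ^ (i + j + 1) / (((i + j + 1) * Nat.factorial i * Nat.factorial j : ℕ) : ℝ)) *
                |∑ x, (A i).mulVec u x * (A j).mulVec u x| :=
                mul_le_mul_of_nonneg_left (le_abs_self _) hcoefnn
            _ = T ^ (i + j + 1) * (|∑ x, (A i).mulVec u x * (A j).mulVec u x| /
                  (((i + j + 1) * Nat.factorial i * Nat.factorial j : ℕ) : ℝ)) := by ring
            _ ≤ T ^ (2 * rs + 1) * (|∑ x, (A i).mulVec u x * (A j).mulVec u x| /
                  (((i + j + 1) * Nat.factorial i * Nat.factorial j : ℕ) : ℝ)) :=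
                mul_le_mul_of_nonneg_right
                  (pow_le_pow_of_le_one hT0.le hT1' (by omega))
                  (div_nonneg (abs_nonneg _) hDpos.le)
    calc ∑ i ∈ Finset.range (r + 1), ∑ j ∈ Finset.range (r + 1),
          (T ^ (i + j + 1) / (((i + j + 1) * Nat.factorial i * Nat.factorial j : ℕ) : ℝ)) *
            (∑ x, (A i).mulVec u x * (A j).mulVec u x)
        ≤ ∑ i ∈ Finset.range (r + 1), ∑ j ∈ Finset.range (r + 1),
            T ^ (2 * rs + 1) * (|∑ x, (A i).mulVec u x * (A j).mulVec u x| /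
              (((i + j + 1) * Nat.factorial i * Nat.factorial j : ℕ) : ℝ)) :=
          Finset.sum_le_sum fun i hi => Finset.sum_le_sum fun j hj => hterm i hi j hj
      _ = T ^ (2 * rs + 1) * B := by
          rw [hB, Finset.mul_sum]
          exact Finset.sum_congr rfl fun i _ => (Finset.mul_sum _ _ _).symm
      _ ≤ max C₁ B * T ^ (2 * rs + 1) := by
          rw [mul_comm]
          exact mul_le_mul_of_nonneg_right (le_max_right _ _) (by positivity)
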